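/- Let q > 3 be a prime, p a prime with q | p - 1, and G = (C_p × C_p) ⋊ C_q where a generator of C_q acts as a diagonal matrix diag(λ, μ) with λ, μ of order q, λ ≠ μ, and λμ ≠ 1. Then Aut(G) ≅ Hol(C_p) × Hol(C_p). -/

import Mathlib

open Multiplicative SemidirectProduct

section Aux
variable {p q : ℕ}

def upow (u : (ZMod p)ˣ) (n : ZMod q) : ZMod p := (u : ZMod p) ^ n.val

def cyc (u : (ZMod p)ˣ) (n : ZMod q) : ZMod p :=
  ((u : ZMod p) ^ n.val - 1) * ((u : ZMod p) - 1)⁻¹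

lemma unpow_val_eq {u : (ZMod p)ˣ} (ho : orderOf u = q) (j : ℕ) :
    u ^ ((j : ZMod q)).val = u ^ j := by
  rw [pow_eq_pow_iff_modEq, ho, ZMod.val_natCast]
  exact Nat.mod_modEq j q

lemma npow_val_eq {u : (ZMod p)ˣ} (ho : orderOf u = q) (j : ℕ) :
    (u : ZMod p) ^ ((j : ZMod q)).val = (u : ZMod p) ^ j := by
  rw [← Units.val_pow_eq_pow_val, ← Units.val_pow_eq_pow_val, unpow_val_eq ho]

lemma upow_add [NeZero q] {u : (ZMod p)ˣ} (ho : orderOf u = q) (n n' : ZMod q) :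
    upow u (n + n') = upow u n * upow u n' := by
  have h1 : (((n.val + n'.val : ℕ)) : ZMod q) = n + n' := by
    rw [Nat.cast_add, ZMod.natCast_val, ZMod.natCast_val, ZMod.cast_id, ZMod.cast_id]
  rw [upow, ← h1, npow_val_eq ho, pow_add]; rfl

lemma upow_zero (u : (ZMod p)ˣ) : upow u (0 : ZMod q) = 1 := by
  simp [upow, ZMod.val_zero]

lemma cyc_zero (u : (ZMod p)ˣ) : cyc u (0 : ZMod q) = 0 := by
  simp [cyc, ZMod.val_zero]

lemma cyc_add [NeZero q] {u : (ZMod p)ˣ} (ho : orderOf u = q) (n n' : ZMod q) :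
    cyc u (n + n') = cyc u n + upow u n * cyc u n' := by
  have := upow_add ho n n'
  simp only [upow] at this
  simp only [cyc, this, upow]
  ring

lemma cyc_one (hq1 : Fact (1 < q)) {u : (ZMod p)ˣ} (hu : (u : ZMod p) - 1 ≠ 0)
    [Fact p.Prime] : cyc u (1 : ZMod q) = 1 := by
  rw [cyc, ZMod.val_one, pow_one, mul_inv_cancel₀ hu]

end Aux


section Constr
set_option linter.unusedSectionVars false
variable {p q : ℕ} [NeZero p] [NeZero q]
variable (φ : Multiplicative (ZMod q) →* MulAut (Multiplicative (ZMod p × ZMod p)))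
variable (l m : (ZMod p)ˣ)

/-- the additive action of a `MulAut` of `Multiplicative (ZMod p)`. -/
def Dm (σ : MulAut (Multiplicative (ZMod p))) (x : ZMod p) : ZMod p := toAdd (σ (ofAdd x))

lemma Dm_add (σ : MulAut (Multiplicative (ZMod p))) (x y : ZMod p) :
    Dm σ (x + y) = Dm σ x + Dm σ y := by
  simp [Dm, ofAdd_add]

lemma Dm_zero (σ : MulAut (Multiplicative (ZMod p))) : Dm σ 0 = 0 := by
  simp [Dm]

lemma Dm_smul (σ : MulAut (Multiplicative (ZMod p))) (s x : ZMod p) :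
    Dm σ (s * x) = s * Dm σ x := by
  have h1 : ∀ (j : ℕ) (y : ZMod p), Dm σ (j • y) = j • Dm σ y := fun j y =>
    (AddMonoidHom.mk' (Dm σ) (Dm_add σ)).map_nsmul j y
  have h2 : s * x = s.val • x := by
    rw [nsmul_eq_mul, ZMod.natCast_val, ZMod.cast_id]
  rw [h2, h1, nsmul_eq_mul, ZMod.natCast_val, ZMod.cast_id]

lemma Dm_mul_comm (σ : MulAut (Multiplicative (ZMod p))) (x y : ZMod p) :
    Dm σ (x * y) = y * Dm σ x := by
  rw [mul_comm, Dm_smul]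

lemma Dm_mul_apply (σ τ : MulAut (Multiplicative (ZMod p))) (x : ZMod p) :
    Dm (σ * τ) x = Dm σ (Dm τ x) := by
  simp [Dm]

variable (hact : ∀ v : ZMod p × ZMod p,
      φ (Multiplicative.ofAdd (1 : ZMod q)) (Multiplicative.ofAdd v) =
        Multiplicative.ofAdd ((l : ZMod p) * v.1, (m : ZMod p) * v.2))

include hact in
lemma phi_apply (n : ZMod q) (w : ZMod p × ZMod p) :
    φ (ofAdd n) (ofAdd w) = ofAdd (upow l n * w.1, upow m n * w.2) := by
  have key : ∀ (j : ℕ) (w : ZMod p × ZMod p), φ (ofAdd (1 : ZMod q) ^ j) (ofAdd w) =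
      ofAdd ((l : ZMod p) ^ j * w.1, (m : ZMod p) ^ j * w.2) := by
    intro j
    induction j with
    | zero => intro w; simp
    | succ j ih =>
      intro w
      rw [pow_succ, map_mul, MulAut.mul_apply, hact, ih]
      exact congrArg ofAdd (Prod.ext (by simp; ring) (by simp; ring))
  have hn : ofAdd (1 : ZMod q) ^ n.val = ofAdd n := by
    rw [← ofAdd_nsmul, nsmul_eq_mul, mul_one, ZMod.natCast_val, ZMod.cast_id]
  rw [← hn, key]; rfl

include hact in
lemma mk_mul (gl gl' : Multiplicative (ZMod p × ZMod p)) (gr gr' : Multiplicative (ZMod q)) :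
    (⟨gl, gr⟩ * ⟨gl', gr'⟩ : Multiplicative (ZMod p × ZMod p) ⋊[φ] Multiplicative (ZMod q)) =
      ⟨ofAdd (toAdd gl + (upow l (toAdd gr) * (toAdd gl').1,
          upow m (toAdd gr) * (toAdd gl').2)), ofAdd (toAdd gr + toAdd gr')⟩ := by
  refine SemidirectProduct.ext ?_ rfl
  rw [mul_left]
  show gl * φ gr gl' = _
  conv_lhs => rw [← ofAdd_toAdd gl', ← ofAdd_toAdd gr]
  rw [phi_apply φ l m hact, ← ofAdd_toAdd gl, ← ofAdd_add]
  simp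

/-- `Hol(C_p)` as a semidirect product. -/
abbrev Hol (p : ℕ) := Multiplicative (ZMod p) ⋊[MonoidHom.id (MulAut (Multiplicative (ZMod p)))]
    MulAut (Multiplicative (ZMod p))

/-- the underlying function of the automorphism of `G` attached to `h`. -/
def rawMap (h : Hol p × Hol p) (g : Multiplicative (ZMod p × ZMod p) ⋊[φ] Multiplicative (ZMod q)) :
    Multiplicative (ZMod p × ZMod p) ⋊[φ] Multiplicative (ZMod q) :=
  ⟨ofAdd (Dm h.1.right (toAdd g.left).1 + toAdd h.1.left * cyc l (toAdd g.right),
          Dm h.2.right (toAdd g.left).2 + toAdd h.2.left * cyc m (toAdd g.right)),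
   g.right⟩

lemma rawMap_mk (h : Hol p × Hol p) (gl gr) :
    rawMap φ l m h ⟨gl, gr⟩ =
      ⟨ofAdd (Dm h.1.right (toAdd gl).1 + toAdd h.1.left * cyc l (toAdd gr),
          Dm h.2.right (toAdd gl).2 + toAdd h.2.left * cyc m (toAdd gr)), gr⟩ := rfl

variable {φ l m}

lemma rawMap_one (g) : rawMap φ l m 1 g = g := by
  refine SemidirectProduct.ext ?_ rfl
  show ofAdd _ = g.left
  rw [← ofAdd_toAdd g.left]
  congr 1
  refine Prod.ext ?_ ?_ <;>
    simp [Dm, toAdd_ofAdd, SemidirectProduct.one_left, SemidirectProduct.one_right]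

include hact in
lemma rawMap_mul (hlo : orderOf l = q) (hmo : orderOf m = q) (h : Hol p × Hol p) (g g') :
    rawMap φ l m h (g * g') = rawMap φ l m h g * rawMap φ l m h g' := by
  obtain ⟨gl, gr⟩ := g
  obtain ⟨gl', gr'⟩ := g'
  rw [mk_mul φ l m hact, rawMap_mk, rawMap_mk, rawMap_mk, mk_mul φ l m hact]
  refine SemidirectProduct.ext ?_ rfl
  show ofAdd _ = ofAdd _
  congr 1
  refine Prod.ext ?_ ?_ <;>
    simp only [toAdd_ofAdd, Prod.fst_add, Prod.snd_add, cyc_add hlo, cyc_add hmo,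
      Dm_add, Dm_smul] <;> ring

lemma rawMap_comp (h h' : Hol p × Hol p) (g) :
    rawMap φ l m h (rawMap φ l m h' g) = rawMap φ l m (h * h') g := by
  obtain ⟨gl, gr⟩ := g
  rw [rawMap_mk, rawMap_mk, rawMap_mk]
  refine SemidirectProduct.ext ?_ rfl
  show ofAdd _ = ofAdd _
  congr 1
  have e1 : (h * h').1.right = h.1.right * h'.1.right := rfl
  have e2 : (h * h').2.right = h.2.right * h'.2.right := rfl
  have e3 : toAdd (h * h').1.left = toAdd h.1.left + Dm h.1.right (toAdd h'.1.left) := by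
    show toAdd (h.1.left * (MonoidHom.id _) h.1.right h'.1.left) = _
    rw [toAdd_mul]; rfl
  have e4 : toAdd (h * h').2.left = toAdd h.2.left + Dm h.2.right (toAdd h'.2.left) := by
    show toAdd (h.2.left * (MonoidHom.id _) h.2.right h'.2.left) = _
    rw [toAdd_mul]; rfl
  refine Prod.ext ?_ ?_ <;>
    simp only [toAdd_ofAdd, e1, e2, e3, e4, Dm_mul_apply, Dm_add, Dm_mul_comm] <;> ring

variable (φ l m)

include hact in
/-- the automorphism of `G` attached to `h`. -/
def holMap (hlo : orderOf l = q) (hmo : orderOf m = q) (h : Hol p × Hol p) :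
    MulAut (Multiplicative (ZMod p × ZMod p) ⋊[φ] Multiplicative (ZMod q)) where
  toFun := rawMap φ l m h
  invFun := rawMap φ l m h⁻¹
  left_inv g := by rw [rawMap_comp, inv_mul_cancel, rawMap_one]
  right_inv g := by rw [rawMap_comp, mul_inv_cancel, rawMap_one]
  map_mul' := rawMap_mul hact hlo hmo h

/-- the homomorphism `Hol(C_p) × Hol(C_p) →* Aut(G)`. -/
def holHom (hlo : orderOf l = q) (hmo : orderOf m = q) :
    (Hol p × Hol p) →* MulAut (Multiplicative (ZMod p × ZMod p) ⋊[φ] Multiplicative (ZMod q)) where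
  toFun := holMap φ l m hact hlo hmo
  map_one' := MulEquiv.ext fun g => rawMap_one g
  map_mul' h h' := MulEquiv.ext fun g => (rawMap_comp h h' g).symm

lemma holHom_apply (hlo : orderOf l = q) (hmo : orderOf m = q) (h : Hol p × Hol p) (g) :
    holHom φ l m hact hlo hmo h g = rawMap φ l m h g := rfl

end Constr

section Units
variable {p : ℕ}

/-- the automorphism of `Multiplicative (ZMod p)` given by multiplication by a unit. -/
def mulautOfUnit (u : (ZMod p)ˣ) : MulAut (Multiplicative (ZMod p)) where
  toFun x := ofAdd ((u : ZMod p) * toAdd x)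
  invFun x := ofAdd (((u⁻¹ : (ZMod p)ˣ) : ZMod p) * toAdd x)
  left_inv x := by
    simp only [toAdd_ofAdd, ← mul_assoc, Units.inv_mul, one_mul, ofAdd_toAdd]
  right_inv x := by
    simp only [toAdd_ofAdd, ← mul_assoc, Units.mul_inv, one_mul, ofAdd_toAdd]
  map_mul' x y := by
    simp only [toAdd_mul, mul_add, ofAdd_add]

lemma Dm_mulautOfUnit (u : (ZMod p)ˣ) (x : ZMod p) :
    Dm (mulautOfUnit u) x = (u : ZMod p) * x := rfl

/-- `ℕ`-indexed geometric sum. -/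
def cycN (u : (ZMod p)ˣ) (j : ℕ) : ZMod p := ((u : ZMod p) ^ j - 1) * ((u : ZMod p) - 1)⁻¹

lemma cyc_eq_cycN {q : ℕ} (u : (ZMod p)ˣ) (n : ZMod q) : cyc u n = cycN u n.val := rfl

lemma cycN_zero (u : (ZMod p)ˣ) : cycN u 0 = 0 := by simp [cycN]

lemma cycN_succ [Fact p.Prime] {u : (ZMod p)ˣ} (hu : (u : ZMod p) ≠ 1) (j : ℕ) :
    cycN u (j + 1) = cycN u j + (u : ZMod p) ^ j := by
  have h1 : ((u : ZMod p) - 1) * ((u : ZMod p) - 1)⁻¹ = 1 :=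
    mul_inv_cancel₀ (sub_ne_zero.mpr hu)
  have h2 : cycN u (j + 1) =
      cycN u j + (u : ZMod p) ^ j * (((u : ZMod p) - 1) * ((u : ZMod p) - 1)⁻¹) := by
    simp only [cycN, pow_succ]; ring
  rw [h2, h1, mul_one]

end Units

set_option maxHeartbeats 2000000 in
/-- Type 8: if `q > 3`, `q | p - 1`, and `G = (C_p × C_p) ⋊ C_q` where a
generator of `C_q` acts as `diag(λ, μ)` with `λ, μ` of order `q`, `λ ≠ μ`,
`λμ ≠ 1`, then `Aut(G) ≅ Hol(C_p) × Hol(C_p)`. -/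
theorem aut_type8
    {p q : ℕ} (hp : p.Prime) (hq : q.Prime) (hq3 : 3 < q) (hdvd : q ∣ p - 1)
    (φ : Multiplicative (ZMod q) →* MulAut (Multiplicative (ZMod p × ZMod p)))
    (l m : (ZMod p)ˣ) (hlo : orderOf l = q) (hmo : orderOf m = q)
    (hne : l ≠ m) (hdet : l * m ≠ 1)
    (hact : ∀ v : ZMod p × ZMod p,
      φ (Multiplicative.ofAdd (1 : ZMod q)) (Multiplicative.ofAdd v) =
        Multiplicative.ofAdd ((l : ZMod p) * v.1, (m : ZMod p) * v.2)) :
    Nonempty (MulAut (Multiplicative (ZMod p × ZMod p) ⋊[φ] Multiplicative (ZMod q)) ≃*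
      (Multiplicative (ZMod p) ⋊[MonoidHom.id (MulAut (Multiplicative (ZMod p)))]
          MulAut (Multiplicative (ZMod p))) ×
        (Multiplicative (ZMod p) ⋊[MonoidHom.id (MulAut (Multiplicative (ZMod p)))]
          MulAut (Multiplicative (ZMod p)))) := by
  haveI : Fact p.Prime := ⟨hp⟩
  haveI : Fact q.Prime := ⟨hq⟩
  haveI : NeZero p := ⟨hp.pos.ne'⟩
  haveI : NeZero q := ⟨hq.pos.ne'⟩
  have hqltp : q < p := by
    have h2 := hp.two_le
    have h1 : q ≤ p - 1 := Nat.le_of_dvd (by omega) hdvd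
    omega
  have hla1 : (l : ZMod p) ≠ 1 := by
    intro h
    have : l = 1 := Units.ext (by simpa using h)
    rw [this, orderOf_one] at hlo
    omega
  have hma1 : (m : ZMod p) ≠ 1 := by
    intro h
    have : m = 1 := Units.ext (by simpa using h)
    rw [this, orderOf_one] at hmo
    omega
  have hlma : (l : ZMod p) ≠ (m : ZMod p) := fun h => hne (Units.ext h)
  -- the candidate isomorphism
  set Φ := holHom φ l m hact hlo hmo with hΦ
  -- injectivity
  have hinj : Function.Injective Φ := by
    rw [injective_iff_map_eq_one]
    intro h hh
    have hg : ∀ g, rawMap φ l m h g = g := by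
      intro g
      have := DFunLike.congr_fun hh g
      simpa [hΦ, holHom_apply] using this
    have hD1 : ∀ x : ZMod p, Dm h.1.right x = x := by
      intro x
      have h0 := hg ⟨ofAdd (x, 0), ofAdd 0⟩
      rw [rawMap_mk] at h0
      have h1 := congrArg (fun z => (toAdd z.left).1) h0
      simpa [cyc_zero] using h1
    have hD2 : ∀ x : ZMod p, Dm h.2.right x = x := by
      intro x
      have h0 := hg ⟨ofAdd (0, x), ofAdd 0⟩
      rw [rawMap_mk] at h0
      have h1 := congrArg (fun z => (toAdd z.left).2) h0
      simpa [cyc_zero] using h1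
    have hcl1 : cyc l (1 : ZMod q) = 1 := cyc_one ⟨hq.one_lt⟩ (sub_ne_zero.mpr hla1)
    have hcm1 : cyc m (1 : ZMod q) = 1 := cyc_one ⟨hq.one_lt⟩ (sub_ne_zero.mpr hma1)
    have hb1 : toAdd h.1.left = 0 := by
      have h0 := hg ⟨ofAdd (0, 0), ofAdd 1⟩
      rw [rawMap_mk] at h0
      have h1 := congrArg (fun z => (toAdd z.left).1) h0
      simpa [hcl1, Dm_zero] using h1
    have hb2 : toAdd h.2.left = 0 := by
      have h0 := hg ⟨ofAdd (0, 0), ofAdd 1⟩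
      rw [rawMap_mk] at h0
      have h1 := congrArg (fun z => (toAdd z.left).2) h0
      simpa [hcm1, Dm_zero] using h1
    have hcomp : ∀ hh : Hol p, toAdd hh.left = 0 → (∀ x, Dm hh.right x = x) → hh = 1 := by
      intro hh hl hr
      refine SemidirectProduct.ext ?_ ?_
      · rw [SemidirectProduct.one_left, ← ofAdd_toAdd hh.left, hl, ofAdd_zero]
      · rw [SemidirectProduct.one_right]
        refine MulEquiv.ext fun z => ?_
        have := hr (toAdd z)
        rw [Dm] at this
        have h2 := congrArg ofAdd this
        rwa [ofAdd_toAdd, ofAdd_toAdd] at h2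
    exact Prod.ext (hcomp h.1 hb1 hD1) (hcomp h.2 hb2 hD2)
  -- surjectivity
  have hsurj : Function.Surjective Φ := by
    intro α
    -- Step A: automorphisms preserve the subgroup with trivial right component
    have stepA : ∀ (β : MulAut (Multiplicative (ZMod p × ZMod p) ⋊[φ] Multiplicative (ZMod q)))
        (g : Multiplicative (ZMod p × ZMod p) ⋊[φ] Multiplicative (ZMod q)),
        g.right = 1 → (β g).right = 1 := by
      intro β g hg1
      have hgp : g ^ p = 1 := by
        have hg : g = SemidirectProduct.inl g.left :=
          SemidirectProduct.ext (by simp) (by simp [hg1])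
        rw [hg, ← map_pow]
        have : g.left ^ p = 1 := by
          rw [← ofAdd_toAdd g.left, ← ofAdd_nsmul]
          have : p • toAdd g.left = 0 := by
            rw [← Nat.cast_smul_eq_nsmul (ZMod p), ZMod.natCast_self, zero_smul]
          rw [this, ofAdd_zero]
        rw [this, map_one]
      have hβp : ((β g).right) ^ p = 1 := by
        have : (β g) ^ p = 1 := by rw [← map_pow, hgp, map_one]
        have h2 := congrArg SemidirectProduct.rightHom this
        rwa [map_pow, map_one] at h2
      have hsm : (p : ZMod q) * toAdd ((β g).right) = 0 := by
        have := congrArg toAdd hβp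
        rw [← ofAdd_toAdd ((β g).right), ← ofAdd_nsmul, toAdd_ofAdd, toAdd_one] at this
        rwa [← Nat.cast_smul_eq_nsmul (ZMod q), smul_eq_mul] at this
      have hpne : (p : ZMod q) ≠ 0 := by
        rw [Ne, ZMod.natCast_eq_zero_iff]
        intro hqp
        rcases (Nat.Prime.eq_one_or_self_of_dvd hp q hqp) with h | h
        · exact hq.one_lt.ne' h
        · omega
      have : toAdd ((β g).right) = 0 := by
        rcases mul_eq_zero.mp hsm with h | h
        · exact absurd h hpne
        · exact h
      rw [← ofAdd_toAdd ((β g).right), this, ofAdd_zero]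
    -- the restriction of α (and of its inverse) to the left factor
    set f : ZMod p × ZMod p → ZMod p × ZMod p :=
      fun v => toAdd ((α (SemidirectProduct.inl (ofAdd v))).left) with hf
    set f' : ZMod p × ZMod p → ZMod p × ZMod p :=
      fun v => toAdd ((α.symm (SemidirectProduct.inl (ofAdd v))).left) with hf'
    have hainl : ∀ v, α (SemidirectProduct.inl (ofAdd v)) = SemidirectProduct.inl (ofAdd (f v)) :=
      fun v => SemidirectProduct.ext (ofAdd_toAdd _).symm
        ((stepA α _ (by simp)).trans (by simp))
    have hainl' : ∀ v, α.symm (SemidirectProduct.inl (ofAdd v)) =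
        SemidirectProduct.inl (ofAdd (f' v)) :=
      fun v => SemidirectProduct.ext (ofAdd_toAdd _).symm
        ((stepA α.symm _ (by simp)).trans (by simp))
    have hff' : ∀ v, f (f' v) = v := by
      intro v
      have h1 : α (SemidirectProduct.inl (ofAdd (f' v))) = SemidirectProduct.inl (ofAdd v) := by
        rw [← hainl' v, MulEquiv.apply_symm_apply]
      have h2 := (hainl (f' v)).symm.trans h1
      exact ofAdd.injective (SemidirectProduct.inl_injective h2)
    have hf'f : ∀ v, f' (f v) = v := by
      intro v
      have h1 : α.symm (SemidirectProduct.inl (ofAdd (f v))) = SemidirectProduct.inl (ofAdd v) := by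
        rw [← hainl v, MulEquiv.symm_apply_apply]
      have h2 := (hainl' (f v)).symm.trans h1
      exact ofAdd.injective (SemidirectProduct.inl_injective h2)
    have hfadd : ∀ v w, f (v + w) = f v + f w := by
      intro v w
      have h1 : (SemidirectProduct.inl (ofAdd (v + w)) :
          Multiplicative (ZMod p × ZMod p) ⋊[φ] Multiplicative (ZMod q)) =
          SemidirectProduct.inl (ofAdd v) * SemidirectProduct.inl (ofAdd w) := by
        rw [← map_mul, ← ofAdd_add]
      have h2 := congrArg α h1
      rw [map_mul, hainl, hainl, hainl, ← map_mul, ← ofAdd_add] at h2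
      exact ofAdd.injective (SemidirectProduct.inl_injective h2)
    have hf'add : ∀ v w, f' (v + w) = f' v + f' w := by
      intro v w
      have h1 : (SemidirectProduct.inl (ofAdd (v + w)) :
          Multiplicative (ZMod p × ZMod p) ⋊[φ] Multiplicative (ZMod q)) =
          SemidirectProduct.inl (ofAdd v) * SemidirectProduct.inl (ofAdd w) := by
        rw [← map_mul, ← ofAdd_add]
      have h2 := congrArg α.symm h1
      rw [map_mul, hainl', hainl', hainl', ← map_mul, ← ofAdd_add] at h2
      exact ofAdd.injective (SemidirectProduct.inl_injective h2)
    have hf0 : f 0 = 0 := by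
      have h := hfadd 0 0
      rw [add_zero] at h
      exact left_eq_add.mp h
    have hf'0 : f' 0 = 0 := by
      have h := hf'add 0 0
      rw [add_zero] at h
      exact left_eq_add.mp h
    -- linearity of f
    have hflin : ∀ (s : ZMod p) (v : ZMod p × ZMod p), f (s • v) = s • f v := by
      intro s v
      have h1 : ∀ (j : ℕ) (w : ZMod p × ZMod p), f (j • w) = j • f w := fun j w =>
        (AddMonoidHom.mk' f hfadd).map_nsmul j w
      have hs : s = ((s.val : ℕ) : ZMod p) := by rw [ZMod.natCast_val, ZMod.cast_id]
      rw [hs, Nat.cast_smul_eq_nsmul, Nat.cast_smul_eq_nsmul, h1]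
    set a := (f (1, 0)).1 with hadef
    set c := (f (1, 0)).2 with hcdef
    set b := (f (0, 1)).1 with hbdef
    set d := (f (0, 1)).2 with hddef
    have hfe1 : f (1, 0) = (a, c) := rfl
    have hfe2 : f (0, 1) = (b, d) := rfl
    have hform : ∀ x y : ZMod p, f (x, y) = (x * a + y * b, x * c + y * d) := by
      intro x y
      have h1 : (x, y) = x • ((1 : ZMod p), (0 : ZMod p)) + y • ((0 : ZMod p), (1 : ZMod p)) := by
        rw [Prod.smul_mk, Prod.smul_mk]
        refine Prod.ext ?_ ?_ <;> simp
      rw [h1, hfadd, hflin, hflin, hfe1, hfe2, Prod.smul_mk, Prod.smul_mk]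
      refine Prod.ext ?_ ?_ <;> simp
    have hfne : ¬(a = 0 ∧ c = 0) := by
      rintro ⟨h1, h2⟩
      have h3 : f (1, 0) = 0 := by rw [hfe1, h1, h2]; rfl
      have h4 := congrArg f' h3
      rw [hf'f, hf'0] at h4
      exact one_ne_zero (congrArg Prod.fst h4)
    have hbd : ¬(b = 0 ∧ d = 0) := by
      rintro ⟨h1, h2⟩
      have h3 : f (0, 1) = 0 := by rw [hfe2, h1, h2]; rfl
      have h4 := congrArg f' h3
      rw [hf'f, hf'0] at h4
      exact one_ne_zero (congrArg Prod.snd h4)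
    have hab : ¬(a = 0 ∧ b = 0) := by
      rintro ⟨h1, h2⟩
      have h3 : f (f' (1, 0)) = (1, 0) := hff' (1, 0)
      have h4 : f ((f' (1, 0)).1, (f' (1, 0)).2) = (1, 0) := by
        rw [Prod.mk.eta]; exact h3
      rw [hform] at h4
      have h5 := congrArg Prod.fst h4
      simp only [h1, h2, mul_zero, add_zero] at h5
      exact one_ne_zero h5.symm
    -- conjugation relation
    set t : Multiplicative (ZMod p × ZMod p) ⋊[φ] Multiplicative (ZMod q) :=
      SemidirectProduct.inr (ofAdd (1 : ZMod q)) with ht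
    set k : ZMod q := toAdd ((α t).right) with hk
    have conj_inl : ∀ (w : Multiplicative (ZMod p × ZMod p) ⋊[φ] Multiplicative (ZMod q))
        (x : Multiplicative (ZMod p × ZMod p)),
        w * SemidirectProduct.inl x * w⁻¹ = SemidirectProduct.inl (φ w.right x) := by
      intro w x
      have h1 : (SemidirectProduct.inr w.right :
            Multiplicative (ZMod p × ZMod p) ⋊[φ] Multiplicative (ZMod q)) *
          SemidirectProduct.inl x * (SemidirectProduct.inr w.right)⁻¹ =
          SemidirectProduct.inl (φ w.right x) := by
        rw [← map_inv, ← SemidirectProduct.inl_aut]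
      calc w * SemidirectProduct.inl x * w⁻¹
          = SemidirectProduct.inl w.left *
            (SemidirectProduct.inr w.right * SemidirectProduct.inl x *
              (SemidirectProduct.inr w.right)⁻¹) * (SemidirectProduct.inl w.left)⁻¹ := by
            conv_lhs => rw [← SemidirectProduct.inl_left_mul_inr_right w]
            group
        _ = SemidirectProduct.inl w.left * SemidirectProduct.inl (φ w.right x) *
              (SemidirectProduct.inl w.left)⁻¹ := by rw [h1]
        _ = SemidirectProduct.inl (w.left * φ w.right x * w.left⁻¹) := by
            rw [map_mul, map_mul, map_inv]
        _ = SemidirectProduct.inl (φ w.right x) := by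
            rw [mul_comm w.left, mul_inv_cancel_right]
    have hconj : ∀ v : ZMod p × ZMod p,
        f ((l : ZMod p) * v.1, (m : ZMod p) * v.2) =
          (upow l k * (f v).1, upow m k * (f v).2) := by
      intro v
      have h2 := congrArg α (conj_inl t (ofAdd v))
      rw [map_mul, map_mul, map_inv, hainl, conj_inl] at h2
      have h3 : φ t.right (ofAdd v) = ofAdd ((l : ZMod p) * v.1, (m : ZMod p) * v.2) := hact v
      rw [h3, hainl] at h2
      have h4 : φ ((α t).right) (ofAdd (f v)) =
          ofAdd (upow l k * (f v).1, upow m k * (f v).2) := by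
        rw [← ofAdd_toAdd ((α t).right), ← hk, phi_apply φ l m hact]
      rw [h4] at h2
      have h5 := SemidirectProduct.inl_injective h2
      exact (ofAdd.injective h5).symm
    have eqA : (l : ZMod p) * a = upow l k * a := by
      have h := congrArg Prod.fst (hconj (1, 0))
      simpa [hform, hfe1] using h
    have eqC : (l : ZMod p) * c = upow m k * c := by
      have h := congrArg Prod.snd (hconj (1, 0))
      simpa [hform, hfe1] using h
    have eqB : (m : ZMod p) * b = upow l k * b := by
      have h := congrArg Prod.fst (hconj (0, 1))
      simpa [hform, hfe2] using h
    have eqD : (m : ZMod p) * d = upow m k * d := by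
      have h := congrArg Prod.snd (hconj (0, 1))
      simpa [hform, hfe2] using h
    by_cases ha : a = 0
    · exfalso
      have hb : b ≠ 0 := fun h => hab ⟨ha, h⟩
      have hc : c ≠ 0 := fun h => hfne ⟨ha, h⟩
      have hm_eq : m = l ^ k.val := by
        refine Units.ext ?_
        rw [Units.val_pow_eq_pow_val]
        exact mul_right_cancel₀ hb eqB
      have hl_eq : l = m ^ k.val := by
        refine Units.ext ?_
        rw [Units.val_pow_eq_pow_val]
        exact mul_right_cancel₀ hc eqC
      have hKK : l ^ (k.val * k.val) = l ^ 1 := by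
        rw [pow_mul, ← hm_eq, ← hl_eq, pow_one]
      have hmod : k.val * k.val ≡ 1 [MOD q] := by
        have h2 := pow_eq_pow_iff_modEq.mp hKK
        rwa [hlo] at h2
      have hZ : k * k = 1 := by
        have h2 := (ZMod.natCast_eq_natCast_iff _ _ q).mpr hmod
        push_cast [ZMod.natCast_val, ZMod.cast_id] at h2
        exact h2
      have hcases : k = 1 ∨ k = -1 := by
        have h1 : (k - 1) * (k + 1) = 0 := by linear_combination hZ
        rcases mul_eq_zero.mp h1 with h | h
        · exact Or.inl (sub_eq_zero.mp h)
        · exact Or.inr (eq_neg_of_add_eq_zero_left h)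
      rcases hcases with hk1 | hkm1
      · have hmodk : k.val ≡ 1 [MOD q] := by
          have h2 : ((k.val : ℕ) : ZMod q) = ((1 : ℕ) : ZMod q) := by
            rw [ZMod.natCast_val, ZMod.cast_id, hk1, Nat.cast_one]
          exact (ZMod.natCast_eq_natCast_iff _ _ _).mp h2
        have h3 : l ^ k.val = l ^ 1 := by
          rw [pow_eq_pow_iff_modEq, hlo]; exact hmodk
        rw [h3, pow_one] at hm_eq
        exact hne hm_eq.symm
      · have hq1 : ((k.val + 1 : ℕ) : ZMod q) = 0 := by
          push_cast [ZMod.natCast_val, ZMod.cast_id]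
          rw [hkm1]; ring
        have hdvd2 : q ∣ k.val + 1 := (ZMod.natCast_eq_zero_iff _ _).mp hq1
        have hlm1 : l * m = 1 := by
          rw [hm_eq, ← pow_succ']
          refine orderOf_dvd_iff_pow_eq_one.mp ?_
          rw [hlo]
          exact hdvd2
        exact hdet hlm1
    · -- main case : k = 1 and the matrix is diagonal
      have hlk : l ^ k.val = l := by
        refine Units.ext ?_
        rw [Units.val_pow_eq_pow_val]
        exact (mul_right_cancel₀ ha eqA).symm
      have hmodk : k.val ≡ 1 [MOD q] := by
        have h2 := pow_eq_pow_iff_modEq.mp (show l ^ k.val = l ^ 1 by rw [hlk, pow_one])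
        rwa [hlo] at h2
      have hk1 : k = 1 := by
        have h2 := (ZMod.natCast_eq_natCast_iff k.val 1 q).mpr hmodk
        rwa [ZMod.natCast_val, ZMod.cast_id, Nat.cast_one] at h2
      have hupl : upow l k = (l : ZMod p) := by
        show (l : ZMod p) ^ k.val = (l : ZMod p)
        rw [← Units.val_pow_eq_pow_val, hlk]
      have hupm : upow m k = (m : ZMod p) := by
        show (m : ZMod p) ^ k.val = (m : ZMod p)
        have h3 : m ^ k.val = m ^ 1 := by rw [pow_eq_pow_iff_modEq, hmo]; exact hmodk
        rw [← Units.val_pow_eq_pow_val, h3, pow_one]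
      have hb0 : b = 0 := by
        by_contra hbne
        rw [hupl] at eqB
        exact hlma (mul_right_cancel₀ hbne eqB).symm
      have hc0 : c = 0 := by
        by_contra hcne
        rw [hupm] at eqC
        exact hlma (mul_right_cancel₀ hcne eqC)
      have hd : d ≠ 0 := fun h => hbd ⟨hb0, h⟩
      set b₁ : ZMod p := (toAdd ((α t).left)).1 with hb₁
      set b₂ : ZMod p := (toAdd ((α t).left)).2 with hb₂
      refine ⟨((⟨ofAdd b₁, mulautOfUnit (Units.mk0 a ha)⟩ : Hol p),
              (⟨ofAdd b₂, mulautOfUnit (Units.mk0 d hd)⟩ : Hol p)), ?_⟩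
      set h : Hol p × Hol p := ((⟨ofAdd b₁, mulautOfUnit (Units.mk0 a ha)⟩ : Hol p),
              (⟨ofAdd b₂, mulautOfUnit (Units.mk0 d hd)⟩ : Hol p)) with hh
      have hΦinl : ∀ v : ZMod p × ZMod p, Φ h (SemidirectProduct.inl (ofAdd v)) =
          SemidirectProduct.inl (ofAdd (a * v.1, d * v.2)) := by
        intro v
        rw [holHom_apply]
        show rawMap φ l m h ⟨ofAdd v, 1⟩ = _
        rw [rawMap_mk]
        refine SemidirectProduct.ext ?_ rfl
        show ofAdd _ = ofAdd _
        congr 1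
        refine Prod.ext ?_ ?_ <;>
          simp [Dm_mulautOfUnit, cyc_zero, hh]
      have hαinl : ∀ v : ZMod p × ZMod p, α (SemidirectProduct.inl (ofAdd v)) =
          SemidirectProduct.inl (ofAdd (a * v.1, d * v.2)) := by
        intro v
        rw [hainl]
        have hv : f v = (v.1 * a + v.2 * b, v.1 * c + v.2 * d) := hform v.1 v.2
        rw [hv]
        congr 1
        refine Prod.ext ?_ ?_ <;> simp [hb0, hc0, mul_comm]
      have hat : α t = ⟨ofAdd (b₁, b₂), ofAdd (1 : ZMod q)⟩ := by
        refine SemidirectProduct.ext ?_ ?_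
        · show (α t).left = ofAdd (b₁, b₂)
          rw [← ofAdd_toAdd ((α t).left)]
        · show (α t).right = ofAdd (1 : ZMod q)
          have h2 : toAdd ((α t).right) = (1 : ZMod q) := by rw [← hk]; exact hk1
          rw [← ofAdd_toAdd ((α t).right), h2]
      have hpowt : ∀ j : ℕ,
          (⟨ofAdd (b₁, b₂), ofAdd (1 : ZMod q)⟩ :
            Multiplicative (ZMod p × ZMod p) ⋊[φ] Multiplicative (ZMod q)) ^ j =
          ⟨ofAdd (b₁ * cycN l j, b₂ * cycN m j), ofAdd ((j : ℕ) : ZMod q)⟩ := by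
        intro j
        induction j with
        | zero =>
          rw [pow_zero]
          refine SemidirectProduct.ext ?_ ?_ <;>
            simp [cycN_zero, Prod.mk_zero_zero]
        | succ j ih =>
          rw [pow_succ, ih, mk_mul φ l m hact]
          refine SemidirectProduct.ext ?_ ?_
          · show ofAdd _ = ofAdd _
            congr 1
            have hul : upow l ((j : ℕ) : ZMod q) = (l : ZMod p) ^ j := npow_val_eq hlo j
            have hum : upow m ((j : ℕ) : ZMod q) = (m : ZMod p) ^ j := npow_val_eq hmo j
            refine Prod.ext ?_ ?_ <;>
              simp only [toAdd_ofAdd, Prod.fst_add, Prod.snd_add, hul, hum,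
                cycN_succ hla1, cycN_succ hma1] <;> ring
          · show ofAdd _ = ofAdd _
            congr 1
            simp only [toAdd_ofAdd]
            push_cast
            ring
      have hαinr : ∀ n : ZMod q, α (SemidirectProduct.inr (ofAdd n)) =
          ⟨ofAdd (b₁ * cyc l n, b₂ * cyc m n), ofAdd n⟩ := by
        intro n
        have h1 : (SemidirectProduct.inr (ofAdd n) :
            Multiplicative (ZMod p × ZMod p) ⋊[φ] Multiplicative (ZMod q)) = t ^ n.val := by
          rw [ht, ← map_pow, ← ofAdd_nsmul, nsmul_eq_mul, mul_one, ZMod.natCast_val, ZMod.cast_id]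
        rw [h1, map_pow, hat, hpowt, cyc_eq_cycN, cyc_eq_cycN]
        have h2 : (((n.val : ℕ) : ZMod q)) = n := by rw [ZMod.natCast_val, ZMod.cast_id]
        rw [h2]
      have hΦinr : ∀ n : ZMod q, Φ h (SemidirectProduct.inr (ofAdd n)) =
          ⟨ofAdd (b₁ * cyc l n, b₂ * cyc m n), ofAdd n⟩ := by
        intro n
        rw [holHom_apply]
        show rawMap φ l m h ⟨1, ofAdd n⟩ = _
        rw [rawMap_mk]
        refine SemidirectProduct.ext ?_ rfl
        show ofAdd _ = ofAdd _
        congr 1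
        refine Prod.ext ?_ ?_ <;> simp [Dm_mulautOfUnit, hh, Dm_zero]
      refine MulEquiv.ext fun g => ?_
      calc Φ h g = Φ h (SemidirectProduct.inl g.left * SemidirectProduct.inr g.right) := by
            rw [SemidirectProduct.inl_left_mul_inr_right]
        _ = Φ h (SemidirectProduct.inl (ofAdd (toAdd g.left))) *
              Φ h (SemidirectProduct.inr (ofAdd (toAdd g.right))) := by
            rw [map_mul, ofAdd_toAdd, ofAdd_toAdd]
        _ = α (SemidirectProduct.inl (ofAdd (toAdd g.left))) *
              α (SemidirectProduct.inr (ofAdd (toAdd g.right))) := by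
            rw [hΦinl, hαinl, hΦinr, hαinr]
        _ = α g := by
            rw [ofAdd_toAdd, ofAdd_toAdd, ← map_mul, SemidirectProduct.inl_left_mul_inr_right]
  exact ⟨(MulEquiv.ofBijective Φ ⟨hinj, hsurj⟩).symm⟩
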